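/- For every x in the simplex Δ_n, the matrix I_n − ΘW(x) is invertible and the matrix V(x) = (I_n − ΘW(x))^{−1}(I_n − Θ) is row-stochastic, i.e., all entries of V(x) are nonnegative and each row of V(x) sums to 1. -/

import Mathlib

open Matrix

attribute [local instance] Matrix.linftyOpNormedRing Matrix.linftyOpNormedAlgebra

/-- `W(x) = diag(x) + (I - diag(x)) C` -/
noncomputable def Wmat {n : ℕ} (C : Matrix (Fin n) (Fin n) ℝ) (x : Fin n → ℝ) :
    Matrix (Fin n) (Fin n) ℝ :=
  Matrix.diagonal x + (1 - Matrix.diagonal x) * C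

/-- The simplex `Δ_n`. -/
def simplex (n : ℕ) : Set (Fin n → ℝ) := {x | (∀ i, 0 ≤ x i) ∧ ∑ i, x i = 1}

theorem stmt0 (n : ℕ) (hn : 2 ≤ n) (C : Matrix (Fin n) (Fin n) ℝ)
    (hCnonneg : ∀ i j, 0 ≤ C i j) (hCrow : ∀ i, ∑ j, C i j = 1)
    (hCdiag : ∀ i, C i i = 0)
    (θ : Fin n → ℝ) (hθ0 : ∀ i, 0 ≤ θ i) (hθ1 : ∀ i, θ i < 1) (hθex : ∃ j, 0 < θ j)
    (x : Fin n → ℝ) (hx : x ∈ simplex n) :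
    IsUnit (1 - Matrix.diagonal θ * Wmat C x) ∧
    (∀ i j, 0 ≤ ((1 - Matrix.diagonal θ * Wmat C x)⁻¹ * (1 - Matrix.diagonal θ)) i j) ∧
    (∀ i, ∑ j, ((1 - Matrix.diagonal θ * Wmat C x)⁻¹ * (1 - Matrix.diagonal θ)) i j = 1) := by
  obtain ⟨hx0, hx1⟩ := hx
  have hxle : ∀ i, x i ≤ 1 := by
    intro i
    rw [← hx1]
    exact Finset.single_le_sum (fun j _ => hx0 j) (Finset.mem_univ i)
  set A : Matrix (Fin n) (Fin n) ℝ := Matrix.diagonal θ * Wmat C x with hA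
  -- entries of W
  have hW : ∀ i j, Wmat C x i j = (if i = j then x i else 0) + (1 - x i) * C i j := by
    intro i j
    have h1 : (1 : Matrix (Fin n) (Fin n) ℝ) - Matrix.diagonal x
        = Matrix.diagonal (fun i => 1 - x i) := by
      rw [← Matrix.diagonal_one, Matrix.diagonal_sub]
    simp [Wmat, h1, Matrix.add_apply, Matrix.diagonal_mul, Matrix.diagonal_apply]
  have hWnonneg : ∀ i j, 0 ≤ Wmat C x i j := by
    intro i j
    rw [hW]
    have := mul_nonneg (sub_nonneg.2 (hxle i)) (hCnonneg i j)
    split <;> [exact add_nonneg (hx0 i) this; simpa]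
  have hWrow : ∀ i, ∑ j, Wmat C x i j = 1 := by
    intro i
    simp only [hW]
    rw [Finset.sum_add_distrib, ← Finset.mul_sum, hCrow]
    simp
  have hAentry : ∀ i j, A i j = θ i * Wmat C x i j := by
    intro i j; simp [hA, Matrix.diagonal_mul]
  have hAnonneg : ∀ i j, 0 ≤ A i j := fun i j => by
    rw [hAentry]; exact mul_nonneg (hθ0 i) (hWnonneg i j)
  have hArow : ∀ i, ∑ j, A i j = θ i := by
    intro i
    simp only [hAentry]
    rw [← Finset.mul_sum, hWrow, mul_one]
  -- norm bound
  have hnpos : 0 < n := by omega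
  have : Nonempty (Fin n) := ⟨⟨0, hnpos⟩⟩
  have hnorm : ‖A‖ < 1 := by
    rw [Matrix.linfty_opNorm_def]
    rw [show (1 : ℝ) = ((1 : NNReal) : ℝ) by norm_num, NNReal.coe_lt_coe]
    rw [Finset.sup_lt_iff (by norm_num : (⊥ : NNReal) < 1)]
    intro i _
    rw [← NNReal.coe_lt_coe]
    push_cast
    have : ∀ j, (‖A i j‖₊ : ℝ) = A i j := fun j => by
      rw [coe_nnnorm, Real.norm_of_nonneg (hAnonneg i j)]
    calc ∑ j, (‖A i j‖₊ : ℝ) = ∑ j, A i j := by simp_rw [this]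
      _ = θ i := hArow i
      _ < 1 := hθ1 i
  have hUnit : IsUnit (1 - A) := isUnit_one_sub_of_norm_lt_one hnorm
  -- Neumann series
  have hSummable : Summable (fun k : ℕ => A ^ k) :=
    summable_geometric_of_norm_lt_one hnorm
  have hinv_eq : (1 - A)⁻¹ = ∑' k : ℕ, A ^ k := by
    rw [Matrix.nonsing_inv_eq_ringInverse, ← geom_series_eq_inverse A hnorm]
    rfl
  -- nonneg entries of powers
  have hPow : ∀ (k : ℕ) i j, 0 ≤ (A ^ k) i j := by
    intro k
    induction k with
    | zero => intro i j; simp [Matrix.one_apply]; split <;> norm_num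
    | succ k ih =>
      intro i j
      rw [pow_succ, Matrix.mul_apply]
      exact Finset.sum_nonneg fun l _ => mul_nonneg (ih i l) (hAnonneg l j)
  -- entries of the tsum
  have hinv_nonneg : ∀ i j, 0 ≤ (1 - A)⁻¹ i j := by
    intro i j
    rw [hinv_eq]
    have hs1 : Summable (fun k : ℕ => (A ^ k : Matrix (Fin n) (Fin n) ℝ) i) := by
      have := hSummable.hasSum
      exact ⟨_, (Pi.hasSum.mp this i)⟩
    have h2 : (∑' k : ℕ, A ^ k) i j = ∑' k : ℕ, (A ^ k) i j := by
      have e := tsum_apply (f := fun k : ℕ => ((A ^ k : Matrix (Fin n) (Fin n) ℝ) : Fin n → Fin n → ℝ)) (x := i) hSummable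
      exact (congrFun e j).trans (tsum_apply (x := j) hs1)
    rw [h2]
    exact tsum_nonneg fun k => hPow k i j
  have hdθ : (1 : Matrix (Fin n) (Fin n) ℝ) - Matrix.diagonal θ
      = Matrix.diagonal (fun i => 1 - θ i) := by
    rw [← Matrix.diagonal_one, Matrix.diagonal_sub]
  refine ⟨hUnit, ?_, ?_⟩
  · intro i j
    rw [hdθ, Matrix.mul_diagonal]
    exact mul_nonneg (hinv_nonneg i j) (sub_nonneg.2 (hθ1 j).le)
  · intro i
    have hinvmul : (1 - A)⁻¹ * (1 - A) = 1 :=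
      Matrix.nonsing_inv_mul _ ((Matrix.isUnit_iff_isUnit_det _).mp hUnit)
    have hrowsub : ∀ k, ∑ j, (1 - A) k j = 1 - θ k := by
      intro k
      simp only [Matrix.sub_apply]
      rw [Finset.sum_sub_distrib, hArow]
      simp [Matrix.one_apply]
    have key : ∑ j, ((1 - A)⁻¹ * (1 - A)) i j = ∑ k, (1 - A)⁻¹ i k * (1 - θ k) := by
      simp only [Matrix.mul_apply]
      rw [Finset.sum_comm]
      congr 1
      ext k
      rw [← Finset.mul_sum, hrowsub]
    rw [hinvmul] at key
    simp only [Matrix.one_apply, Finset.sum_ite_eq, Finset.mem_univ, if_true] at key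
    calc ∑ j, ((1 - A)⁻¹ * (1 - Matrix.diagonal θ)) i j
        = ∑ j, (1 - A)⁻¹ i j * (1 - θ j) := by
          simp_rw [hdθ, Matrix.mul_diagonal]
      _ = 1 := key.symm
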